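/- Fix an integer L ≥ 1 and let F(x) = 1 − e^{−Lx} Σ_{k=0}^{L−1} (Lx)^k / k! for x ≥ 0. Then the expected maximum of N i.i.d. random variables with distribution F, namely E_N = ∫_0^∞ (1 − F(x)^N) dx, satisfies lim_{N→∞} E_N / ( (log N + (L−1) log log N)/L ) = 1. -/

import Mathlib

set_option maxHeartbeats 1000000

open Real Set Finset Filter MeasureTheory Topology

noncomputable def gf (L : ℕ) (x : ℝ) : ℝ :=
  Real.exp (-(L : ℝ) * x) * ∑ k ∈ Finset.range L, ((L : ℝ) * x) ^ k / (Nat.factorial k : ℝ)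

lemma gf_nonneg (L : ℕ) {x : ℝ} (hx : 0 ≤ x) : 0 ≤ gf L x := by
  apply mul_nonneg (Real.exp_nonneg _)
  apply Finset.sum_nonneg
  intro k _
  positivity

lemma gf_le_one (L : ℕ) {x : ℝ} (hx : 0 ≤ x) : gf L x ≤ 1 := by
  have h1 : ∑ k ∈ Finset.range L, ((L : ℝ) * x) ^ k / (Nat.factorial k : ℝ) ≤
      Real.exp ((L : ℝ) * x) := Real.sum_le_exp_of_nonneg (by positivity) L
  calc gf L x ≤ Real.exp (-(L : ℝ) * x) * Real.exp ((L : ℝ) * x) := by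
        apply mul_le_mul_of_nonneg_left h1 (Real.exp_nonneg _)
    _ = 1 := by rw [← Real.exp_add]; ring_nf; exact Real.exp_zero

lemma gf_lower (L : ℕ) (hL : 1 ≤ L) {x : ℝ} (hx : 0 ≤ x) :
    Real.exp (-(L : ℝ) * x) * ((L : ℝ) * x) ^ (L - 1) / (Nat.factorial (L - 1) : ℝ) ≤ gf L x := by
  rw [mul_div_assoc]
  apply mul_le_mul_of_nonneg_left _ (Real.exp_nonneg _)
  apply Finset.single_le_sum (f := fun k => ((L : ℝ) * x) ^ k / (Nat.factorial k : ℝ))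
  · intro k _; positivity
  · simp [Finset.mem_range]; omega

lemma hasDerivAt_gf (L : ℕ) (hL : 1 ≤ L) (x : ℝ) :
    HasDerivAt (gf L)
      (-(L : ℝ) * (Real.exp (-(L : ℝ) * x) * ((L : ℝ) * x) ^ (L - 1) / (Nat.factorial (L - 1) : ℝ))) x := by
  have he : HasDerivAt (fun x : ℝ => Real.exp (-(L : ℝ) * x)) (-(L : ℝ) * Real.exp (-(L : ℝ) * x)) x := by
    have := (Real.hasDerivAt_exp (-(L : ℝ) * x)).comp x
      (((hasDerivAt_id x).const_mul (-(L : ℝ))) : HasDerivAt (fun y : ℝ => -(L:ℝ) * y) (-(L:ℝ) * 1) x)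
    simpa [Function.comp_def, mul_comm] using this
  have hs : HasDerivAt (fun x : ℝ => ∑ k ∈ Finset.range L, ((L : ℝ) * x) ^ k / (Nat.factorial k : ℝ))
      (∑ k ∈ Finset.range L, (k : ℝ) * ((L : ℝ) * x) ^ (k - 1) * (L : ℝ) / (Nat.factorial k : ℝ)) x := by
    apply HasDerivAt.fun_sum
    intro k _
    have h1 : HasDerivAt (fun x : ℝ => ((L : ℝ) * x) ^ k)
        ((k : ℝ) * ((L : ℝ) * x) ^ (k - 1) * (L : ℝ)) x := by
      have := (hasDerivAt_pow k ((L : ℝ) * x)).comp x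
        (((hasDerivAt_id x).const_mul ((L : ℝ))) : HasDerivAt (fun y : ℝ => (L:ℝ) * y) ((L:ℝ) * 1) x)
      simpa [Function.comp_def, mul_comm, mul_assoc, mul_left_comm] using this
    simpa [div_eq_mul_inv, mul_comm, mul_assoc, mul_left_comm] using h1.div_const (Nat.factorial k : ℝ)
  have key : ∑ k ∈ Finset.range L, (k : ℝ) * ((L : ℝ) * x) ^ (k - 1) * (L : ℝ) / (Nat.factorial k : ℝ)
      = (L : ℝ) * ∑ k ∈ Finset.range (L - 1), ((L : ℝ) * x) ^ k / (Nat.factorial k : ℝ) := by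
    obtain ⟨m, rfl⟩ : ∃ m, L = m + 1 := ⟨L - 1, by omega⟩
    rw [Finset.sum_range_succ']
    simp only [Nat.add_sub_cancel]
    rw [Finset.mul_sum]
    simp only [Nat.cast_zero, zero_mul, zero_div, add_zero]
    apply Finset.sum_congr rfl
    intro k _
    rw [Nat.factorial_succ]
    push_cast
    field_simp
  have := he.mul hs
  refine HasDerivAt.congr_deriv this ?_
  rw [key]
  obtain ⟨m, rfl⟩ : ∃ m, L = m + 1 := ⟨L - 1, by omega⟩
  simp only [Nat.add_sub_cancel]
  rw [Finset.sum_range_succ]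
  ring

lemma gf_antitoneOn (L : ℕ) (hL : 1 ≤ L) : AntitoneOn (gf L) (Set.Ici 0) := by
  apply antitoneOn_of_deriv_nonpos (convex_Ici 0)
  · exact fun x _ => (hasDerivAt_gf L hL x).continuousAt.continuousWithinAt
  · intro x _
    exact (hasDerivAt_gf L hL x).differentiableAt.differentiableWithinAt
  · intro x hx
    rw [interior_Ici] at hx
    rw [(hasDerivAt_gf L hL x).deriv]
    have h0 : (0:ℝ) ≤ (L : ℝ) * x := mul_nonneg (Nat.cast_nonneg L) (le_of_lt (Set.mem_Ioi.mp hx))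
    have h1 : (0:ℝ) ≤ Real.exp (-(L : ℝ) * x) * ((L : ℝ) * x) ^ (L - 1) / (Nat.factorial (L - 1) : ℝ) :=
      div_nonneg (mul_nonneg (Real.exp_nonneg _) (pow_nonneg h0 _)) (Nat.cast_nonneg _)
    have h2 : (0:ℝ) ≤ (L : ℝ) := Nat.cast_nonneg L
    nlinarith

lemma fact_add_le (k j : ℕ) : Nat.factorial (k + j) ≤ Nat.factorial k * (k + j) ^ j := by
  induction j with
  | zero => simp
  | succ n ih =>
    have h1 : Nat.factorial (k + (n+1)) = (k + n + 1) * Nat.factorial (k + n) := by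
      rw [← Nat.add_assoc]; exact Nat.factorial_succ _
    rw [h1]
    calc (k + n + 1) * Nat.factorial (k + n) ≤ (k + n + 1) * (Nat.factorial k * (k + n) ^ n) :=
          Nat.mul_le_mul_left _ ih
      _ ≤ (k + n + 1) * (Nat.factorial k * (k + n + 1) ^ n) := by
          apply Nat.mul_le_mul_left
          exact Nat.mul_le_mul_left _ (Nat.pow_le_pow_left (by omega) n)
      _ = Nat.factorial k * (k + (n+1)) ^ (n+1) := by ring_nf
  
lemma fact_le_pow_mul (L k : ℕ) (hk : k < L) :
    (Nat.factorial (L - 1) : ℝ) ≤ (Nat.factorial k : ℝ) * (L : ℝ) ^ (L - 1 - k) := by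
  have h1 : L - 1 = k + (L - 1 - k) := by omega
  have h2 : Nat.factorial (L - 1) ≤ Nat.factorial k * L ^ (L - 1 - k) := by
    calc Nat.factorial (L - 1) ≤ Nat.factorial k * (k + (L - 1 - k)) ^ (L - 1 - k) := by
          conv_lhs => rw [h1]
          have := fact_add_le k (L - 1 - k)
          omega
      _ ≤ Nat.factorial k * L ^ (L - 1 - k) :=
          Nat.mul_le_mul_left _ (Nat.pow_le_pow_left (by omega) _)
  exact_mod_cast h2

-- each term bound: for t ≥ L, k < L : t^k / k! ≤ t^(L-1)/(L-1)!
lemma term_le (L k : ℕ) (hk : k < L) {t : ℝ} (ht : (L : ℝ) ≤ t) :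
    t ^ k / (Nat.factorial k : ℝ) ≤ t ^ (L - 1) / (Nat.factorial (L - 1) : ℝ) := by
  have ht0 : (0:ℝ) ≤ t := le_trans (Nat.cast_nonneg L) ht
  rw [div_le_div_iff₀ (by positivity) (by positivity)]
  have hsplit : t ^ (L - 1) = t ^ k * t ^ (L - 1 - k) := by
    rw [← pow_add]; congr 1; omega
  rw [hsplit]
  calc t ^ k * (Nat.factorial (L-1) : ℝ) ≤ t ^ k * ((Nat.factorial k : ℝ) * (L : ℝ) ^ (L - 1 - k)) := by
        apply mul_le_mul_of_nonneg_left (fact_le_pow_mul L k hk) (by positivity)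
    _ ≤ t ^ k * ((Nat.factorial k : ℝ) * t ^ (L - 1 - k)) := by
        apply mul_le_mul_of_nonneg_left _ (by positivity)
        apply mul_le_mul_of_nonneg_left (pow_le_pow_left₀ (Nat.cast_nonneg L) ht _) (by positivity)
    _ = t ^ k * t ^ (L - 1 - k) * (Nat.factorial k : ℝ) := by ring

lemma gf_upper (L : ℕ) (hL : 1 ≤ L) {x : ℝ} (hx : 1 ≤ x) :
    gf L x ≤ (L : ℝ) * (Real.exp (-(L : ℝ) * x) * ((L : ℝ) * x) ^ (L - 1) / (Nat.factorial (L - 1) : ℝ)) := by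
  have ht : (L : ℝ) ≤ (L : ℝ) * x := by nlinarith [(Nat.one_le_cast (α := ℝ)).mpr hL]
  unfold gf
  calc Real.exp (-(L : ℝ) * x) * ∑ k ∈ Finset.range L, ((L : ℝ) * x) ^ k / (Nat.factorial k : ℝ)
      ≤ Real.exp (-(L : ℝ) * x) * ∑ k ∈ Finset.range L, ((L : ℝ) * x) ^ (L-1) / (Nat.factorial (L-1) : ℝ) := by
        apply mul_le_mul_of_nonneg_left _ (Real.exp_nonneg _)
        exact Finset.sum_le_sum fun k hk => term_le L k (Finset.mem_range.mp hk) ht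
    _ = (L : ℝ) * (Real.exp (-(L : ℝ) * x) * ((L : ℝ) * x) ^ (L - 1) / (Nat.factorial (L - 1) : ℝ)) := by
        rw [Finset.sum_const, Finset.card_range]
        push_cast; ring

lemma integrableOn_pow_exp (k : ℕ) {b : ℝ} (hb : 0 < b) :
    IntegrableOn (fun x : ℝ => x ^ k * Real.exp (-b * x)) (Ioi 0) := by
  have h := integrableOn_rpow_mul_exp_neg_mul_rpow (p := 1) (s := (k : ℝ)) (b := b)
    (by exact lt_of_lt_of_le neg_one_lt_zero (Nat.cast_nonneg k)) one_pos hb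
  apply h.congr_fun _ measurableSet_Ioi
  intro x hx
  simp only [Real.rpow_natCast, Real.rpow_one]

lemma integrableOn_gf (L : ℕ) : IntegrableOn (gf L) (Ioi 0) := by
  have h : IntegrableOn (fun x : ℝ => ∑ k ∈ Finset.range L,
      ((L : ℝ) ^ k / (Nat.factorial k : ℝ)) * (x ^ k * Real.exp (-(L : ℝ) * x))) (Ioi 0) := by
    apply MeasureTheory.integrable_finset_sum
    intro k hk
    rcases Nat.eq_zero_or_pos L with hL0 | hL0
    · subst hL0; simp at hk
    · exact ((integrableOn_pow_exp k (by exact_mod_cast hL0)).const_mul _)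
  apply h.congr_fun _ measurableSet_Ioi
  intro x _
  unfold gf
  rw [Finset.mul_sum]
  apply Finset.sum_congr rfl
  intro k _
  rw [mul_pow]
  ring

lemma gf_decay (L : ℕ) (hL : 1 ≤ L) {d x : ℝ} (hd : 1 ≤ d) (hx : d ≤ x) :
    Real.exp (-(L : ℝ) * x) * ((L : ℝ) * x) ^ (L - 1)
      ≤ Real.exp (-(L : ℝ) * d) * ((L : ℝ) * d) ^ (L - 1) * Real.exp (d - x) := by
  have hd0 : (0:ℝ) < d := lt_of_lt_of_le one_pos hd
  have hx0 : (0:ℝ) < x := lt_of_lt_of_le hd0 hx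
  -- x/d ≤ exp (x - d)
  have h1 : x / d ≤ Real.exp (x - d) := by
    have : x / d ≤ 1 + (x - d) := by
      rw [div_le_iff₀ hd0]
      nlinarith
    exact le_trans this (by linarith [Real.add_one_le_exp (x - d)])
  -- x^(L-1) ≤ d^(L-1) * exp((L-1)*(x-d))
  have h2 : x ^ (L-1) ≤ d ^ (L-1) * Real.exp ((L-1 : ℕ) * (x - d)) := by
    have h3 : (x / d) ^ (L-1) ≤ Real.exp (x - d) ^ (L-1) :=
      pow_le_pow_left₀ (by positivity) h1 _
    rw [← Real.exp_nat_mul] at h3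
    rw [div_pow] at h3
    rw [div_le_iff₀ (by positivity)] at h3
    linarith [h3]
  -- combine
  have key : x ^ (L-1) * Real.exp (-(L : ℝ) * x) ≤ d ^ (L-1) * Real.exp (-(L : ℝ) * d) * Real.exp (d - x) := by
    have hL1 : ((L : ℝ) - 1) = ((L - 1 : ℕ) : ℝ) := by
      push_cast [Nat.cast_sub hL]; ring
    have e1 : Real.exp (-(L : ℝ) * x) = Real.exp (-((L:ℝ)-1) * x) * Real.exp (-x) := by
      rw [← Real.exp_add]; ring_nf
    have e2 : Real.exp (-(L : ℝ) * d) = Real.exp (-((L:ℝ)-1) * d) * Real.exp (-d) := by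
      rw [← Real.exp_add]; ring_nf
    calc x ^ (L-1) * Real.exp (-(L : ℝ) * x)
        ≤ (d ^ (L-1) * Real.exp (((L-1:ℕ):ℝ) * (x - d))) * Real.exp (-(L : ℝ) * x) := by
          apply mul_le_mul_of_nonneg_right h2 (Real.exp_nonneg _)
      _ = d ^ (L-1) * Real.exp (-(L : ℝ) * d) * Real.exp (d - x) := by
          rw [← hL1, mul_assoc, mul_assoc, ← Real.exp_add, ← Real.exp_add]
          congr 2
          ring
  calc Real.exp (-(L : ℝ) * x) * ((L : ℝ) * x) ^ (L - 1)
      = (L:ℝ)^(L-1) * (x ^ (L-1) * Real.exp (-(L : ℝ) * x)) := by rw [mul_pow]; ring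
    _ ≤ (L:ℝ)^(L-1) * (d ^ (L-1) * Real.exp (-(L : ℝ) * d) * Real.exp (d - x)) := by
        apply mul_le_mul_of_nonneg_left key (by positivity)
    _ = Real.exp (-(L : ℝ) * d) * ((L : ℝ) * d) ^ (L - 1) * Real.exp (d - x) := by
        rw [mul_pow]; ring

lemma tail_bound (L : ℕ) (hL : 1 ≤ L) {d : ℝ} (hd : 1 ≤ d) :
    ∫ x in Ioi d, gf L x ≤
      (L : ℝ) * (Real.exp (-(L : ℝ) * d) * ((L : ℝ) * d) ^ (L - 1) / (Nat.factorial (L - 1) : ℝ)) := by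
  have hd0 : (0:ℝ) < d := lt_of_lt_of_le one_pos hd
  set C : ℝ := (L : ℝ) * (Real.exp (-(L : ℝ) * d) * ((L : ℝ) * d) ^ (L - 1) / (Nat.factorial (L - 1) : ℝ)) with hC
  have hC0 : 0 ≤ C := by
    apply mul_nonneg (Nat.cast_nonneg L)
    apply div_nonneg _ (Nat.cast_nonneg _)
    exact mul_nonneg (Real.exp_nonneg _) (pow_nonneg (by positivity) _)
  have hptwise : ∀ x ∈ Ioi d, gf L x ≤ C * Real.exp d * Real.exp (-x) := by
    intro x hx
    have hx1 : (1:ℝ) ≤ x := le_trans hd (le_of_lt hx)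
    calc gf L x ≤ (L : ℝ) * (Real.exp (-(L : ℝ) * x) * ((L : ℝ) * x) ^ (L - 1) / (Nat.factorial (L - 1) : ℝ)) :=
          gf_upper L hL hx1
      _ ≤ (L : ℝ) * (Real.exp (-(L : ℝ) * d) * ((L : ℝ) * d) ^ (L - 1) * Real.exp (d - x) / (Nat.factorial (L - 1) : ℝ)) := by
          apply mul_le_mul_of_nonneg_left _ (Nat.cast_nonneg L)
          exact div_le_div_of_nonneg_right (gf_decay L hL hd (le_of_lt hx)) (by positivity) |>.trans_eq rfl
      _ = C * Real.exp d * Real.exp (-x) := by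
          rw [hC, Real.exp_sub, Real.exp_neg]
          field_simp
  have hint : IntegrableOn (fun x : ℝ => C * Real.exp d * Real.exp (-x)) (Ioi d) := by
    have := (exp_neg_integrableOn_Ioi d (by norm_num : (0:ℝ) < 1))
    simp only [neg_mul, one_mul] at this
    exact this.const_mul _
  calc ∫ x in Ioi d, gf L x ≤ ∫ x in Ioi d, C * Real.exp d * Real.exp (-x) := by
        apply setIntegral_mono_on ((integrableOn_gf L).mono_set (Ioi_subset_Ioi (le_of_lt hd0)))
          hint measurableSet_Ioi hptwise
    _ = C * Real.exp d * Real.exp (-d) := by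
        rw [MeasureTheory.integral_const_mul, integral_exp_neg_Ioi]
    _ = C := by rw [mul_assoc, ← Real.exp_add, add_neg_cancel, Real.exp_zero, mul_one]

lemma h_nonneg (L N : ℕ) {x : ℝ} (hx : 0 ≤ x) : 0 ≤ 1 - (1 - gf L x) ^ N := by
  have h1 : (1 - gf L x) ^ N ≤ 1 :=
    pow_le_one₀ (by linarith [gf_le_one L hx]) (by linarith [gf_nonneg L hx])
  linarith

lemma h_le_one (L N : ℕ) {x : ℝ} (hx : 0 ≤ x) : 1 - (1 - gf L x) ^ N ≤ 1 := by
  have h1 : (0:ℝ) ≤ (1 - gf L x) ^ N := pow_nonneg (by linarith [gf_le_one L hx]) N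
  linarith

lemma h_le_Ng (L N : ℕ) {x : ℝ} (hx : 0 ≤ x) : 1 - (1 - gf L x) ^ N ≤ (N : ℝ) * gf L x := by
  have h1 : 1 + (N : ℝ) * (-(gf L x)) ≤ (1 + (-(gf L x))) ^ N :=
    one_add_mul_le_pow (by linarith [gf_le_one L hx]) N
  have : 1 - (N : ℝ) * gf L x ≤ (1 - gf L x) ^ N := by
    simpa [sub_eq_add_neg, mul_neg] using h1
  linarith

lemma continuous_gf (L : ℕ) : Continuous (gf L) := by
  apply Continuous.mul
  · exact Real.continuous_exp.comp (continuous_const.mul continuous_id)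
  · apply continuous_finset_sum
    intro k _
    exact ((continuous_const.mul continuous_id).pow k).div_const _

lemma integrableOn_h (L N : ℕ) : IntegrableOn (fun x : ℝ => 1 - (1 - gf L x) ^ N) (Ioi 0) := by
  apply Integrable.mono' (((integrableOn_gf L).const_mul (N : ℝ)))
  · exact (Continuous.aestronglyMeasurable (by
      exact continuous_const.sub ((continuous_const.sub (continuous_gf L)).pow N)))
  · rw [MeasureTheory.ae_restrict_iff' measurableSet_Ioi]
    apply Filter.Eventually.of_forall
    intro x hx
    have hx0 : (0:ℝ) ≤ x := le_of_lt hx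
    rw [Real.norm_eq_abs, abs_of_nonneg (h_nonneg L N hx0)]
    exact h_le_Ng L N hx0

lemma EN_le (L : ℕ) (hL : 1 ≤ L) (N : ℕ) {d : ℝ} (hd : 1 ≤ d) :
    (∫ x in Ioi (0:ℝ), (1 - (1 - gf L x) ^ N)) ≤
      d + (N : ℝ) * ((L : ℝ) * (Real.exp (-(L : ℝ) * d) * ((L : ℝ) * d) ^ (L - 1) / (Nat.factorial (L - 1) : ℝ))) := by
  have hd0 : (0:ℝ) < d := lt_of_lt_of_le one_pos hd
  have hsplit : (∫ x in Ioi (0:ℝ), (1 - (1 - gf L x) ^ N)) =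
      (∫ x in Ioc (0:ℝ) d, (1 - (1 - gf L x) ^ N)) + (∫ x in Ioi d, (1 - (1 - gf L x) ^ N)) := by
    rw [← setIntegral_union (Ioc_disjoint_Ioi le_rfl) measurableSet_Ioi
      ((integrableOn_h L N).mono_set Ioc_subset_Ioi_self)
      ((integrableOn_h L N).mono_set (Ioi_subset_Ioi (le_of_lt hd0)))]
    rw [Ioc_union_Ioi_eq_Ioi (le_of_lt hd0)]
  rw [hsplit]
  have h1 : (∫ x in Ioc (0:ℝ) d, (1 - (1 - gf L x) ^ N)) ≤ d := by
    calc (∫ x in Ioc (0:ℝ) d, (1 - (1 - gf L x) ^ N)) ≤ ∫ _x in Ioc (0:ℝ) d, (1:ℝ) := by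
          apply setIntegral_mono_on ((integrableOn_h L N).mono_set Ioc_subset_Ioi_self)
            (integrableOn_const measure_Ioc_lt_top.ne) measurableSet_Ioc
          intro x hx
          exact h_le_one L N (le_of_lt hx.1)
      _ = d := by simp [Real.volume_Ioc, ENNReal.toReal_ofReal (le_of_lt hd0), hd0.le]
  have h2 : (∫ x in Ioi d, (1 - (1 - gf L x) ^ N)) ≤
      (N : ℝ) * ((L : ℝ) * (Real.exp (-(L : ℝ) * d) * ((L : ℝ) * d) ^ (L - 1) / (Nat.factorial (L - 1) : ℝ))) := by
    calc (∫ x in Ioi d, (1 - (1 - gf L x) ^ N)) ≤ ∫ x in Ioi d, (N : ℝ) * gf L x := by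
          apply setIntegral_mono_on ((integrableOn_h L N).mono_set (Ioi_subset_Ioi (le_of_lt hd0)))
            (((integrableOn_gf L).mono_set (Ioi_subset_Ioi (le_of_lt hd0))).const_mul (N : ℝ))
            measurableSet_Ioi
          intro x hx
          exact h_le_Ng L N (le_of_lt (lt_trans hd0 hx))
      _ = (N : ℝ) * ∫ x in Ioi d, gf L x := MeasureTheory.integral_const_mul _ _
      _ ≤ _ := by
          apply mul_le_mul_of_nonneg_left (tail_bound L hL hd) (Nat.cast_nonneg N)
  linarith

lemma EN_ge (L : ℕ) (hL : 1 ≤ L) (N : ℕ) {c : ℝ} (hc : 0 < c) :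
    c * (1 - (1 - gf L c) ^ N) ≤ (∫ x in Ioi (0:ℝ), (1 - (1 - gf L x) ^ N)) := by
  have hsplit : (∫ x in Ioi (0:ℝ), (1 - (1 - gf L x) ^ N)) =
      (∫ x in Ioc (0:ℝ) c, (1 - (1 - gf L x) ^ N)) + (∫ x in Ioi c, (1 - (1 - gf L x) ^ N)) := by
    rw [← setIntegral_union (Ioc_disjoint_Ioi le_rfl) measurableSet_Ioi
      ((integrableOn_h L N).mono_set Ioc_subset_Ioi_self)
      ((integrableOn_h L N).mono_set (Ioi_subset_Ioi (le_of_lt hc)))]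
    rw [Ioc_union_Ioi_eq_Ioi (le_of_lt hc)]
  have h2 : (0:ℝ) ≤ ∫ x in Ioi c, (1 - (1 - gf L x) ^ N) := by
    apply setIntegral_nonneg measurableSet_Ioi
    intro x hx
    exact h_nonneg L N (le_of_lt (lt_trans hc hx))
  have h1 : c * (1 - (1 - gf L c) ^ N) ≤ ∫ x in Ioc (0:ℝ) c, (1 - (1 - gf L x) ^ N) := by
    have : ∀ x ∈ Ioc (0:ℝ) c, (1 - (1 - gf L c) ^ N) ≤ 1 - (1 - gf L x) ^ N := by
      intro x hx
      have hgx : gf L c ≤ gf L x :=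
        gf_antitoneOn L hL (le_of_lt hx.1) (le_of_lt hc) hx.2
      have h3 : (1 - gf L x) ^ N ≤ (1 - gf L c) ^ N := by
        apply pow_le_pow_left₀ (by linarith [gf_le_one L (le_of_lt hx.1)]) (by linarith)
      linarith
    calc c * (1 - (1 - gf L c) ^ N) = ∫ _x in Ioc (0:ℝ) c, (1 - (1 - gf L c) ^ N) := by
          simp [Real.volume_Ioc, ENNReal.toReal_ofReal (le_of_lt hc), hc.le]
      _ ≤ _ := by
          apply setIntegral_mono_on
            (integrableOn_const measure_Ioc_lt_top.ne)
            ((integrableOn_h L N).mono_set Ioc_subset_Ioi_self) measurableSet_Ioc this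
  linarith

-- eventual basic facts
lemma ev_basic (L : ℕ) : ∀ᶠ N : ℕ in atTop, 1 ≤ (N:ℝ) ∧ 1 ≤ Real.log N ∧
    0 ≤ Real.log (Real.log N) ∧ Real.log (Real.log N) ≤ Real.log N ∧ (L:ℝ) ≤ Real.log N := by
  have h1 : Tendsto (fun N : ℕ => Real.log N) atTop atTop :=
    Real.tendsto_log_atTop.comp tendsto_natCast_atTop_atTop
  filter_upwards [eventually_ge_atTop 3, h1.eventually_ge_atTop (1:ℝ),
    h1.eventually_ge_atTop ((L:ℝ))] with N hN3 hlog1 hlogL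
  have hN1 : (1:ℝ) ≤ (N:ℝ) := by exact_mod_cast le_trans (by norm_num) hN3
  refine ⟨hN1, hlog1, ?_, ?_, hlogL⟩
  · calc (0:ℝ) = Real.log 1 := (Real.log_one).symm
      _ ≤ Real.log (Real.log N) :=
        Real.log_le_log (by norm_num) hlog1
  · exact Real.log_le_self (by linarith)

lemma limA (L : ℕ) (hL : 1 ≤ L) {ε : ℝ} (hε : 0 < ε) (hε2 : ε < 1/2)
    (d : ℕ → ℝ)
    (hd : ∀ᶠ N : ℕ in atTop, (1+ε) * (Real.log N + ((L:ℝ)-1) * Real.log (Real.log N)) ≤ (L:ℝ) * d N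
      ∧ (L:ℝ) * d N ≤ 2 * (L:ℝ) * Real.log N) :
    Tendsto (fun N : ℕ => (N:ℝ) *
      ((L : ℝ) * (Real.exp (-(L : ℝ) * d N) * ((L : ℝ) * d N) ^ (L - 1) / (Nat.factorial (L - 1) : ℝ))))
      atTop (𝓝 0) := by
  set K : ℝ := (L:ℝ) / (Nat.factorial (L - 1) : ℝ) * (2*(L:ℝ))^(L-1) with hK
  have hbound : Tendsto (fun N : ℕ => K * (Real.log N ^ (L-1) * Real.exp (-(ε * Real.log N)))) atTop (𝓝 0) := by
    have hcomp : Tendsto (fun s : ℝ => (ε * s) ^ (L-1) * Real.exp (-(ε * s))) atTop (𝓝 0) :=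
      (Real.tendsto_pow_mul_exp_neg_atTop_nhds_zero (L-1)).comp
        (Tendsto.const_mul_atTop hε tendsto_id)
    have h2 : Tendsto (fun s : ℝ => (ε^(L-1))⁻¹ * ((ε * s) ^ (L-1) * Real.exp (-(ε * s)))) atTop (𝓝 0) := by
      simpa using hcomp.const_mul ((ε^(L-1))⁻¹)
    have h3 : Tendsto (fun s : ℝ => s ^ (L-1) * Real.exp (-(ε * s))) atTop (𝓝 0) := by
      apply h2.congr
      intro s
      rw [mul_pow]
      field_simp
    have h4 := (h3.comp (Real.tendsto_log_atTop.comp tendsto_natCast_atTop_atTop)).const_mul K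
    simpa using h4
  apply tendsto_of_tendsto_of_tendsto_of_le_of_le' tendsto_const_nhds hbound
  · filter_upwards [ev_basic L, hd] with N ⟨hN1, ht1, hu0, hut, htL⟩ ⟨hd1, hd2⟩
    have hL1 : (1:ℝ) ≤ (L:ℝ) := Nat.one_le_cast.mpr hL
    have hq : 0 ≤ ((L:ℝ)-1) * Real.log (Real.log N) := mul_nonneg (by linarith) hu0
    have hdn : 0 ≤ (L:ℝ) * d N := by nlinarith
    positivity
  · filter_upwards [ev_basic L, hd] with N ⟨hN1, ht1, hu0, hut, htL⟩ ⟨hd1, hd2⟩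
    have hL1 : (1:ℝ) ≤ (L:ℝ) := Nat.one_le_cast.mpr hL
    set t := Real.log N
    have hq : 0 ≤ ((L:ℝ)-1) * Real.log t := mul_nonneg (by linarith) hu0
    have hdn : 0 ≤ (L:ℝ) * d N := by nlinarith
    have hNexp : (N:ℝ) = Real.exp t := (Real.exp_log (by linarith)).symm
    have e1 : (N:ℝ) * Real.exp (-(L : ℝ) * d N) = Real.exp (t - (L:ℝ) * d N) := by
      rw [hNexp, ← Real.exp_add]; ring_nf
    have e2 : Real.exp (t - (L:ℝ) * d N) ≤ Real.exp (-(ε * t)) := by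
      apply Real.exp_le_exp.mpr
      nlinarith
    have e3 : ((L : ℝ) * d N) ^ (L - 1) ≤ (2*(L:ℝ))^(L-1) * t^(L-1) := by
      rw [← mul_pow]
      exact pow_le_pow_left₀ hdn (by nlinarith) _
    calc (N:ℝ) * ((L : ℝ) * (Real.exp (-(L : ℝ) * d N) * ((L : ℝ) * d N) ^ (L - 1) / (Nat.factorial (L - 1) : ℝ)))
        = ((L:ℝ) / (Nat.factorial (L - 1) : ℝ)) * (((N:ℝ) * Real.exp (-(L : ℝ) * d N)) * ((L : ℝ) * d N) ^ (L - 1)) := by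
          ring
      _ ≤ ((L:ℝ) / (Nat.factorial (L - 1) : ℝ)) * ((Real.exp (-(ε * t))) * ((2*(L:ℝ))^(L-1) * t^(L-1))) := by
          apply mul_le_mul_of_nonneg_left _ (by positivity)
          rw [e1]
          apply mul_le_mul e2 e3 (by positivity) (by positivity)
      _ = K * (t ^ (L-1) * Real.exp (-(ε * t))) := by rw [hK]; ring

lemma limB (L : ℕ) (hL : 1 ≤ L) {ε : ℝ} (hε : 0 < ε) (hε2 : ε < 1/2)
    (c : ℕ → ℝ)
    (hc : ∀ᶠ N : ℕ in atTop, (1-ε) * Real.log N ≤ (L:ℝ) * c N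
      ∧ (L:ℝ) * c N ≤ Real.log N + ((L:ℝ)-1) * Real.log (Real.log N) - ε * Real.log N) :
    Tendsto (fun N : ℕ => (N:ℝ) *
      (Real.exp (-(L : ℝ) * c N) * ((L : ℝ) * c N) ^ (L - 1) / (Nat.factorial (L - 1) : ℝ)))
      atTop atTop := by
  set K : ℝ := (1-ε)^(L-1) / (Nat.factorial (L - 1) : ℝ) with hK
  have hK0 : 0 < K := by
    apply div_pos (pow_pos (by linarith) _) (by exact_mod_cast Nat.factorial_pos _)
  have hlow : Tendsto (fun N : ℕ => K * Real.exp (ε * Real.log N)) atTop atTop := by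
    apply Tendsto.const_mul_atTop hK0
    exact Real.tendsto_exp_atTop.comp ((Tendsto.const_mul_atTop hε tendsto_id).comp
      (Real.tendsto_log_atTop.comp tendsto_natCast_atTop_atTop))
  apply tendsto_atTop_mono' _ _ hlow
  filter_upwards [ev_basic L, hc] with N ⟨hN1, ht1, hu0, hut, htL⟩ ⟨hc1, hc2⟩
  set t := Real.log N with htdef
  set u := Real.log t with hudef
  have ht0 : (0:ℝ) < t := by linarith
  have hexpu : Real.exp u = t := Real.exp_log ht0
  have hcn : 0 ≤ (L:ℝ) * c N := le_trans (by nlinarith) hc1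
  have hNexp : (N:ℝ) = Real.exp t := (Real.exp_log (by linarith)).symm
  have e1 : (N:ℝ) * Real.exp (-(L : ℝ) * c N) = Real.exp (t - (L:ℝ) * c N) := by
    rw [hNexp, ← Real.exp_add]; ring_nf
  have e2 : Real.exp (ε * t - ((L:ℝ)-1) * u) ≤ Real.exp (t - (L:ℝ) * c N) := by
    apply Real.exp_le_exp.mpr
    nlinarith
  have e3 : ((1-ε) * t) ^ (L-1) ≤ ((L : ℝ) * c N) ^ (L - 1) :=
    pow_le_pow_left₀ (by nlinarith) hc1 _
  have e4 : Real.exp (((L:ℝ)-1) * u) = t ^ (L-1) := by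
    have h : ((L:ℝ)-1) = ((L-1 : ℕ) : ℝ) := by
      push_cast [Nat.cast_sub hL]; ring
    rw [h, Real.exp_nat_mul, hexpu]
  have e5 : Real.exp (ε*t - ((L:ℝ)-1)*u) * t^(L-1) = Real.exp (ε*t) := by
    rw [← e4, ← Real.exp_add]; ring_nf
  calc K * Real.exp (ε * t)
      = Real.exp (ε*t - ((L:ℝ)-1)*u) * ((1-ε)*t)^(L-1) / (Nat.factorial (L - 1) : ℝ) := by
        rw [hK, mul_pow, ← e5]; ring
    _ ≤ Real.exp (t - (L:ℝ) * c N) * ((L : ℝ) * c N) ^ (L - 1) / (Nat.factorial (L - 1) : ℝ) := by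
        apply div_le_div_of_nonneg_right _ (le_of_lt (by exact_mod_cast Nat.factorial_pos (L-1) : (0:ℝ) < (Nat.factorial (L-1) : ℝ)))
        have h0t : (0:ℝ) ≤ (1-ε)*t := by nlinarith
        exact mul_le_mul e2 e3 (pow_nonneg h0t _) (Real.exp_nonneg _)
    _ = (N:ℝ) * (Real.exp (-(L : ℝ) * c N) * ((L : ℝ) * c N) ^ (L - 1) / (Nat.factorial (L - 1) : ℝ)) := by
        rw [← e1]; ring

/-- Fix `L ≥ 1`, `F(x) = 1 − e^{−Lx} Σ_{k<L} (Lx)^k/k!`. The expected maximum of `N`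
i.i.d. variables with cdf `F`, `E_N = ∫_0^∞ (1 − F(x)^N) dx`, satisfies
`lim_{N→∞} E_N / ((log N + (L−1) log log N)/L) = 1`. -/
theorem chi_square_max_expectation_limit (L : ℕ) (hL : 1 ≤ L) :
    Tendsto (fun N : ℕ =>
        (∫ x in Ioi (0 : ℝ),
          (1 - (1 - Real.exp (-(L : ℝ) * x) *
            ∑ k ∈ Finset.range L, ((L : ℝ) * x) ^ k / (Nat.factorial k : ℝ)) ^ N)) /
        ((Real.log N + ((L : ℝ) - 1) * Real.log (Real.log N)) / L))
      atTop (nhds 1) := by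
  have hL1 : (1:ℝ) ≤ (L:ℝ) := Nat.one_le_cast.mpr hL
  have hLpos : (0:ℝ) < (L:ℝ) := by linarith
  set E : ℕ → ℝ := fun N => ∫ x in Ioi (0:ℝ), (1 - (1 - gf L x) ^ N) with hE
  set a : ℕ → ℝ := fun N => (Real.log N + ((L:ℝ) - 1) * Real.log (Real.log N)) / L with ha
  show Tendsto (fun N => E N / a N) atTop (𝓝 1)
  rw [Metric.tendsto_atTop]
  intro δ hδ
  set ε : ℝ := min (δ/4) (1/4) with hεdef
  have hε : 0 < ε := lt_min (by linarith) (by norm_num)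
  have hε2 : ε < 1/2 := lt_of_le_of_lt (min_le_right _ _) (by norm_num)
  have hεδ : 2 * ε < δ := by
    have : ε ≤ δ/4 := min_le_left _ _
    linarith
  set c : ℕ → ℝ := fun N => (1-ε) * a N with hc
  set d : ℕ → ℝ := fun N => (1+ε) * a N with hd
  -- hypotheses for limA / limB
  have hdh : ∀ᶠ N : ℕ in atTop, (1+ε) * (Real.log N + ((L:ℝ)-1) * Real.log (Real.log N)) ≤ (L:ℝ) * d N
      ∧ (L:ℝ) * d N ≤ 2 * (L:ℝ) * Real.log N := by
    filter_upwards [ev_basic L] with N ⟨hN1, ht1, hu0, hut, htL⟩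
    have heq : (L:ℝ) * d N = (1+ε) * (Real.log N + ((L:ℝ)-1) * Real.log (Real.log N)) := by
      simp only [hd, ha]; field_simp
    constructor
    · exact le_of_eq heq.symm
    · rw [heq]
      have h1 : ((L:ℝ)-1) * Real.log (Real.log N) ≤ ((L:ℝ)-1) * Real.log N :=
        mul_le_mul_of_nonneg_left hut (by linarith)
      have h2 : 0 ≤ ((L:ℝ)-1) * Real.log (Real.log N) := mul_nonneg (by linarith) hu0
      have h3 : Real.log N + ((L:ℝ)-1) * Real.log (Real.log N) ≤ (L:ℝ) * Real.log N := by nlinarith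
      have h4 : 0 ≤ (L:ℝ) * Real.log N := mul_nonneg (by linarith) (by linarith)
      calc (1+ε) * (Real.log N + ((L:ℝ)-1) * Real.log (Real.log N))
          ≤ (3/2) * (Real.log N + ((L:ℝ)-1) * Real.log (Real.log N)) := by nlinarith
        _ ≤ (3/2) * ((L:ℝ) * Real.log N) := by linarith
        _ ≤ 2 * (L:ℝ) * Real.log N := by linarith
  have hch : ∀ᶠ N : ℕ in atTop, (1-ε) * Real.log N ≤ (L:ℝ) * c N
      ∧ (L:ℝ) * c N ≤ Real.log N + ((L:ℝ)-1) * Real.log (Real.log N) - ε * Real.log N := by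
    filter_upwards [ev_basic L] with N ⟨hN1, ht1, hu0, hut, htL⟩
    have heq : (L:ℝ) * c N = (1-ε) * (Real.log N + ((L:ℝ)-1) * Real.log (Real.log N)) := by
      simp only [hc, ha]; field_simp
    have hq : 0 ≤ ((L:ℝ)-1) * Real.log (Real.log N) := mul_nonneg (by linarith) hu0
    constructor
    · rw [heq]; nlinarith
    · rw [heq]; nlinarith
  -- from limA : eventually N * C(d N) ≤ ε
  have hA : ∀ᶠ N : ℕ in atTop, (N:ℝ) *
      ((L : ℝ) * (Real.exp (-(L : ℝ) * d N) * ((L : ℝ) * d N) ^ (L - 1) / (Nat.factorial (L - 1) : ℝ))) ≤ ε := by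
    have := (limA L hL hε hε2 d hdh).eventually (eventually_le_nhds hε)
    filter_upwards [this] with N h using h
  -- eventually a N ≥ 1 and c N > 0 etc
  have haN : ∀ᶠ N : ℕ in atTop, 1 ≤ a N ∧ 0 < c N ∧ 0 ≤ c N ∧ 1 ≤ d N := by
    filter_upwards [ev_basic L] with N ⟨hN1, ht1, hu0, hut, htL⟩
    have hq : 0 ≤ ((L:ℝ)-1) * Real.log (Real.log N) := mul_nonneg (by linarith) hu0
    have h1 : 1 ≤ a N := by
      simp only [ha]
      rw [le_div_iff₀ hLpos]
      nlinarith
    refine ⟨h1, by simp only [hc]; nlinarith, by simp only [hc]; nlinarith, by simp only [hd]; nlinarith⟩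
  -- from limB : eventually exp (-(N * gf L (c N))) ≤ ε, in fact (1 - gf L (c N))^N ≤ ε
  have hB : ∀ᶠ N : ℕ in atTop, (1 - gf L (c N)) ^ N ≤ ε := by
    have htend : Tendsto (fun N : ℕ => (N:ℝ) * gf L (c N)) atTop atTop := by
      apply tendsto_atTop_mono' _ _ (limB L hL hε hε2 c hch)
      filter_upwards [haN] with N ⟨h1, h2, h3, h4⟩
      exact mul_le_mul_of_nonneg_left (gf_lower L hL h3) (Nat.cast_nonneg N)
    filter_upwards [htend.eventually_ge_atTop (Real.log (1/ε)), haN] with N hN ⟨h1, h2, h3, h4⟩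
    have hg0 : 0 ≤ gf L (c N) := gf_nonneg L h3
    have hg1 : gf L (c N) ≤ 1 := gf_le_one L h3
    have step1 : (1 - gf L (c N)) ^ N ≤ Real.exp (-(gf L (c N))) ^ N := by
      apply pow_le_pow_left₀ (by linarith)
      linarith [Real.add_one_le_exp (-(gf L (c N)))]
    have step2 : Real.exp (-(gf L (c N))) ^ N = Real.exp (-((N:ℝ) * gf L (c N))) := by
      rw [← Real.exp_nat_mul]; ring_nf
    have step3 : Real.exp (-((N:ℝ) * gf L (c N))) ≤ Real.exp (-(Real.log (1/ε))) := by
      apply Real.exp_le_exp.mpr; linarith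
    have step4 : Real.exp (-(Real.log (1/ε))) = ε := by
      rw [Real.exp_neg, Real.exp_log (by positivity)]
      simp
    calc (1 - gf L (c N)) ^ N ≤ Real.exp (-((N:ℝ) * gf L (c N))) := by rw [← step2]; exact step1
      _ ≤ ε := by rw [← step4]; exact step3
  -- main eventual bound
  have key : ∀ᶠ N : ℕ in atTop, |E N / a N - 1| ≤ 2*ε := by
    filter_upwards [hA, hB, haN] with N hAN hBN ⟨h1, h2, h3, h4⟩
    have ha0 : 0 < a N := by linarith
    have hdval : d N = (1+ε) * a N := by simp only [hd]
    have hcval : c N = (1-ε) * a N := by simp only [hc]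
    have hεa : ε * 1 ≤ ε * a N := mul_le_mul_of_nonneg_left h1 hε.le
    have hupper : E N ≤ (1 + 2*ε) * a N := by
      have hE1 := EN_le L hL N h4
      have step : E N ≤ d N + ε := le_trans hE1 (by linarith)
      rw [hdval] at step
      linarith [step, hεa]
    have hlower : (1 - 2*ε) * a N ≤ E N := by
      have hEg := EN_ge L hL N h2
      have h5 : 1 - ε ≤ 1 - (1 - gf L (c N)) ^ N := by linarith
      have h6 : c N * (1 - ε) ≤ c N * (1 - (1 - gf L (c N)) ^ N) :=
        mul_le_mul_of_nonneg_left h5 h3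
      have hsq : 0 ≤ ε^2 * a N := mul_nonneg (sq_nonneg ε) ha0.le
      calc (1 - 2*ε) * a N ≤ (1-ε) * a N * (1-ε) := by nlinarith [hsq]
        _ = c N * (1 - ε) := by rw [hcval]
        _ ≤ c N * (1 - (1 - gf L (c N)) ^ N) := h6
        _ ≤ E N := hEg
    rw [abs_le]
    constructor
    · have hlo : (1 - 2*ε) ≤ E N / a N := by
        rw [le_div_iff₀ ha0]; exact hlower
      linarith
    · have hhi : E N / a N ≤ 1 + 2*ε := by
        rw [div_le_iff₀ ha0]; exact hupper
      linarith
  obtain ⟨n₀, hn₀⟩ := eventually_atTop.mp key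
  refine ⟨n₀, fun n hn => ?_⟩
  rw [Real.dist_eq]
  exact lt_of_le_of_lt (hn₀ n hn) hεδ
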